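/- If π is a monotone, sublinear functional on L(𝒜), then the set ba(𝒜,π)₊ of finitely additive nonnegative set functions m on 𝒜 with ∫ h dm ≤ π(h) for all h ∈ L(𝒜) is convex, and it is compact as a subset of the space of real-valued functions on 𝒜 equipped with the topology of pointwise convergence (the weak* topology). -/
import Mathlib


/-- An algebra of subsets of `Ω`: contains `∅` and `univ`, closed under
complements and finite unions. -/
def IsSetAlgebra {Ω : Type*} (𝒜 : Set (Set Ω)) : Prop :=
  ∅ ∈ 𝒜 ∧ Set.univ ∈ 𝒜 ∧ (∀ A ∈ 𝒜, Aᶜ ∈ 𝒜) ∧ ∀ A ∈ 𝒜, ∀ B ∈ 𝒜, A ∪ B ∈ 𝒜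

/-- `sFun β = (1/|β|) ∑_{B ∈ β} 1_B` for a finite sequence (list) of sets `β`. -/
noncomputable def sFun {Ω : Type*} (β : List (Set Ω)) : Ω → ℝ := fun ω =>
  (β.map fun B => B.indicator (fun _ => (1 : ℝ)) ω).sum / β.length

/-- `L(𝒜)`: the linear span of the indicators of sets in `𝒜`. -/
def LSpan {Ω : Type*} (𝒜 : Set (Set Ω)) : Submodule ℝ (Ω → ℝ) :=
  Submodule.span ℝ {f | ∃ A ∈ 𝒜, f = A.indicator fun _ => (1 : ℝ)}

/-- `π` is monotone on `L(𝒜)`. -/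
def MonotoneOnL {Ω : Type*} (𝒜 : Set (Set Ω)) (π : (Ω → ℝ) → ℝ) : Prop :=
  ∀ f ∈ LSpan 𝒜, ∀ g ∈ LSpan 𝒜, f ≤ g → π f ≤ π g

/-- `π` is sublinear on `L(𝒜)`: subadditive and positively homogeneous. -/
def SublinearOnL {Ω : Type*} (𝒜 : Set (Set Ω)) (π : (Ω → ℝ) → ℝ) : Prop :=
  (∀ f ∈ LSpan 𝒜, ∀ g ∈ LSpan 𝒜, π (f + g) ≤ π f + π g) ∧
    ∀ c : ℝ, 0 ≤ c → ∀ f ∈ LSpan 𝒜, π (c • f) = c * π f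

/-- A nonnegative finitely additive set function on the algebra `𝒜`. -/
def IsFANonneg {Ω : Type*} (𝒜 : Set (Set Ω)) (m : Set Ω → ℝ) : Prop :=
  (∀ A ∈ 𝒜, 0 ≤ m A) ∧ m ∅ = 0 ∧
    ∀ A ∈ 𝒜, ∀ B ∈ 𝒜, Disjoint A B → m (A ∪ B) = m A + m B

/-- `𝒩(π) = {A ∈ 𝒜 : π(1_A) = 0}`. -/
def NullPi {Ω : Type*} (𝒜 : Set (Set Ω)) (π : (Ω → ℝ) → ℝ) : Set (Set Ω) :=
  {A ∈ 𝒜 | π (A.indicator fun _ => (1 : ℝ)) = 0}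

/-- `m` is `π`-dominated: `m(A) ≤ π(1_A)` for all `A ∈ 𝒜`. -/
def PiDominated {Ω : Type*} (𝒜 : Set (Set Ω)) (π : (Ω → ℝ) → ℝ) (m : Set Ω → ℝ) : Prop :=
  ∀ A ∈ 𝒜, m A ≤ π (A.indicator fun _ => (1 : ℝ))

/-- `m` is strictly `π`-positive: `𝒩(m) ⊆ 𝒩(π)`. -/
def StrictlyPiPositive {Ω : Type*} (𝒜 : Set (Set Ω)) (π : (Ω → ℝ) → ℝ) (m : Set Ω → ℝ) : Prop :=
  ∀ A ∈ 𝒜, m A = 0 → π (A.indicator fun _ => (1 : ℝ)) = 0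

/-- `I_π(𝓑) = inf over nonempty finite sequences β from 𝓑 of π(s(β))`. -/
noncomputable def interNumPi {Ω : Type*} (π : (Ω → ℝ) → ℝ) (𝓑 : Set (Set Ω)) : ℝ :=
  sInf {r | ∃ β : List (Set Ω), β ≠ [] ∧ (∀ B ∈ β, B ∈ 𝓑) ∧ r = π (sFun β)}

/-- The elementary integral `∫ f dm = Σ_y y · m(f⁻¹{y})` of a function with finite
range with respect to a finitely additive set function `m`. -/
noncomputable def faIntegral {Ω : Type*} (m : Set Ω → ℝ) (f : Ω → ℝ) : ℝ :=
  ∑ᶠ y : ℝ, y * m (f ⁻¹' {y})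

/-- `ba(𝒜,π)₊` realized inside the product space `ℝ^(Set Ω)` (with the pointwise
convergence topology): set functions are extended by `0` outside `𝒜`, which encodes
the space `ℝ^𝒜` of the statement. -/
def baPos' {Ω : Type*} (𝒜 : Set (Set Ω)) (π : (Ω → ℝ) → ℝ) : Set (Set Ω → ℝ) :=
  {m | IsFANonneg 𝒜 m ∧ (∀ A ∉ 𝒜, m A = 0) ∧ ∀ h ∈ LSpan 𝒜, faIntegral m h ≤ π h}


section Aux
variable {Ω : Type*}

lemma range_finite_of_mem_LSpan {𝒜 : Set (Set Ω)} {h : Ω → ℝ} (hh : h ∈ LSpan 𝒜) :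
    (Set.range h).Finite := by
  induction hh using Submodule.span_induction with
  | mem f hf =>
      obtain ⟨A, -, rfl⟩ := hf
      refine ((Set.finite_singleton (0:ℝ)).insert 1).subset ?_
      rintro y ⟨ω, rfl⟩
      by_cases hω : ω ∈ A <;> simp [Set.indicator, hω]
  | zero =>
      refine (Set.finite_singleton (0:ℝ)).subset ?_
      rintro y ⟨ω, rfl⟩; simp
  | add f g _ _ hf hg =>
      refine (Set.Finite.image2 (· + ·) hf hg).subset ?_
      rintro y ⟨ω, rfl⟩
      exact Set.mem_image2.2 ⟨f ω, ⟨ω, rfl⟩, g ω, ⟨ω, rfl⟩, rfl⟩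
  | smul c f _ hf =>
      refine (hf.image (c * ·)).subset ?_
      rintro y ⟨ω, rfl⟩
      exact ⟨f ω, ⟨ω, rfl⟩, rfl⟩

lemma faIntegral_eq_sum {m : Set Ω → ℝ} (hm : m ∅ = 0) {h : Ω → ℝ}
    (hf : (Set.range h).Finite) :
    faIntegral m h = ∑ y ∈ hf.toFinset, y * m (h ⁻¹' {y}) := by
  apply finsum_eq_finset_sum_of_support_subset
  intro y hy
  simp only [Function.mem_support] at hy
  simp only [Finset.coe_sort_coe, Set.Finite.coe_toFinset]
  by_contra hr
  have hpre : h ⁻¹' {y} = ∅ := by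
    ext ω
    simp only [Set.mem_preimage, Set.mem_singleton_iff, Set.mem_empty_iff_false, iff_false]
    intro he
    exact hr ⟨ω, he⟩
  rw [hpre, hm, mul_zero] at hy
  exact hy rfl

lemma faIntegral_indicator {m : Set Ω → ℝ} (hm : m ∅ = 0) (A : Set Ω) :
    faIntegral m (A.indicator fun _ => (1:ℝ)) = m A := by
  have hpre : (A.indicator (fun _ => (1:ℝ))) ⁻¹' {1} = A := by
    ext ω; by_cases hω : ω ∈ A <;> simp [Set.indicator, hω]
  have key : ∀ y : ℝ, y ≠ 1 →
      y * m ((A.indicator fun _ => (1:ℝ)) ⁻¹' {y}) = 0 := by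
    intro y hy
    by_cases hy0 : y = 0
    · simp [hy0]
    · have hpre' : (A.indicator (fun _ => (1:ℝ))) ⁻¹' {y} = ∅ := by
        ext ω
        by_cases hω : ω ∈ A <;>
          simp [Set.indicator, hω, (Ne.symm hy), (Ne.symm hy0)]
      rw [hpre', hm, mul_zero]
  have := finsum_eq_single (fun y => y * m ((A.indicator fun _ => (1:ℝ)) ⁻¹' {y})) 1 key
  rw [faIntegral, this]
  show (1:ℝ) * m ((A.indicator fun _ => (1:ℝ)) ⁻¹' {1}) = m A
  rw [hpre, one_mul]

end Aux

/-- For a monotone sublinear `π` on `L(𝒜)`, the set `ba(𝒜,π)₊` is convex and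
compact in the topology of pointwise convergence on `𝒜` (the weak* topology). -/
theorem baPos_convex_isCompact {Ω : Type*} [Nonempty Ω] (𝒜 : Set (Set Ω))
    (h𝒜 : IsSetAlgebra 𝒜) (π : (Ω → ℝ) → ℝ) (hmono : MonotoneOnL 𝒜 π)
    (hsub : SublinearOnL 𝒜 π) :
    Convex ℝ (baPos' 𝒜 π) ∧ IsCompact (baPos' 𝒜 π) := by
  classical
  constructor
  · -- Convexity
    rintro m₁ ⟨⟨h1n, h1e, h1a⟩, h1o, h1i⟩ m₂ ⟨⟨h2n, h2e, h2a⟩, h2o, h2i⟩ a b ha hb hab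
    have hval : ∀ A, (a • m₁ + b • m₂) A = a * m₁ A + b * m₂ A := fun A => rfl
    have hce : (a • m₁ + b • m₂) (∅ : Set Ω) = 0 := by
      rw [hval, h1e, h2e]; ring
    refine ⟨⟨?_, hce, ?_⟩, ?_, ?_⟩
    · intro A hA
      rw [hval]
      have := h1n A hA; have := h2n A hA
      positivity
    · intro A hA B hB hAB
      simp only [hval, h1a A hA B hB hAB, h2a A hA B hB hAB]; ring
    · intro A hA
      rw [hval, h1o A hA, h2o A hA]; ring
    · intro h hh
      have hfin := range_finite_of_mem_LSpan hh
      have hsum : faIntegral (a • m₁ + b • m₂) h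
          = a * faIntegral m₁ h + b * faIntegral m₂ h := by
        rw [faIntegral_eq_sum hce hfin, faIntegral_eq_sum h1e hfin,
          faIntegral_eq_sum h2e hfin, Finset.mul_sum, Finset.mul_sum,
          ← Finset.sum_add_distrib]
        refine Finset.sum_congr rfl fun y _ => ?_
        rw [hval]; ring
      rw [hsum]
      calc a * faIntegral m₁ h + b * faIntegral m₂ h
          ≤ a * π h + b * π h := by
            gcongr
            · exact h1i h hh
            · exact h2i h hh
        _ = π h := by rw [← add_mul, hab, one_mul]
  · -- Compactness
    set K : Set (Set Ω → ℝ) := Set.univ.pi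
      (fun A => if A ∈ 𝒜 then Set.Icc 0 (π (A.indicator fun _ => (1:ℝ))) else {0}) with hKdef
    have hK : IsCompact K := by
      refine isCompact_univ_pi fun A => ?_
      by_cases hA : A ∈ 𝒜
      · simp only [hA, if_true]; exact isCompact_Icc
      · simp only [hA, if_false]; exact isCompact_singleton
    have hsubK : baPos' 𝒜 π ⊆ K := by
      rintro m ⟨⟨hn, he, ha⟩, ho, hi⟩ A -
      by_cases hA : A ∈ 𝒜
      · simp only [hA, if_true, Set.mem_Icc]
        refine ⟨hn A hA, ?_⟩
        have := hi _ (Submodule.subset_span ⟨A, hA, rfl⟩)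
        rwa [faIntegral_indicator he] at this
      · simp only [hA, if_false, Set.mem_singleton_iff]
        exact ho A hA
    have hclosed : IsClosed (baPos' 𝒜 π) := by
      have heq : baPos' 𝒜 π =
          ((⋂ A ∈ 𝒜, {m : Set Ω → ℝ | 0 ≤ m A}) ∩
           {m : Set Ω → ℝ | m ∅ = 0} ∩
           (⋂ A ∈ 𝒜, ⋂ B ∈ 𝒜, ⋂ (_ : Disjoint A B),
             {m : Set Ω → ℝ | m (A ∪ B) = m A + m B}) ∩
           (⋂ A ∈ 𝒜ᶜ, {m : Set Ω → ℝ | m A = 0}) ∩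
           ⋂ (h : Ω → ℝ) (hh : h ∈ LSpan 𝒜),
             {m : Set Ω → ℝ |
               ∑ y ∈ (range_finite_of_mem_LSpan hh).toFinset, y * m (h ⁻¹' {y}) ≤ π h}) := by
        ext m
        simp only [Set.mem_inter_iff, Set.mem_iInter, Set.mem_setOf_eq, Set.mem_compl_iff]
        constructor
        · rintro ⟨⟨hn, he, hadd⟩, ho, hi⟩
          refine ⟨⟨⟨⟨hn, he⟩, hadd⟩, ho⟩, fun h hh => ?_⟩
          rw [← faIntegral_eq_sum he (range_finite_of_mem_LSpan hh)]
          exact hi h hh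
        · rintro ⟨⟨⟨⟨hn, he⟩, hadd⟩, ho⟩, hi⟩
          refine ⟨⟨hn, he, hadd⟩, ho, fun h hh => ?_⟩
          rw [faIntegral_eq_sum he (range_finite_of_mem_LSpan hh)]
          exact hi h hh
      rw [heq]
      refine ((((isClosed_biInter fun A _ =>
          isClosed_le continuous_const (continuous_apply A)).inter
        (isClosed_eq (continuous_apply ∅) continuous_const)).inter
        (isClosed_biInter fun A _ => isClosed_biInter fun B _ => isClosed_iInter fun _ =>
          isClosed_eq (continuous_apply (A ∪ B))
            ((continuous_apply A).add (continuous_apply B)))).inter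
        (isClosed_biInter fun A _ =>
          isClosed_eq (continuous_apply A) continuous_const)).inter
        (isClosed_iInter fun h => isClosed_iInter fun hh =>
          isClosed_le (continuous_finset_sum _ fun y _ =>
            continuous_const.mul (continuous_apply (h ⁻¹' {y}))) continuous_const)
    exact hK.of_isClosed_subset hclosed hsubK
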